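/- Let $p(r,u)$ be a joint distribution and $q(u|r)$ an auxiliary conditional distribution satisfying $KL(p(r,u) \| q(r,u)) \le KL(p(r)p(u) \| q(r,u))$, where $q(r,u) = p(r)q(u|r)$. Then the mutual information satisfies $I(r;u) \le \mathbb{E}_{p(r,u)}[\log q(u|r)] - \mathbb{E}_{p(r)p(u)}[\log q(u|r)]$ (the CLUB upper bound). -/
import Mathlib


open Finset

/-- CLUB upper bound on mutual information (Cheng et al.), finite setting.
`p` is the joint distribution of `(r,u)`, `q` an auxiliary conditional `q(u|r)`
with full support.  If `KL(p(r,u) ‖ p(r)q(u|r)) ≤ KL(p(r)p(u) ‖ p(r)q(u|r))`,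
then `I(r;u) ≤ E_{p(r,u)}[log q(u|r)] - E_{p(r)p(u)}[log q(u|r)]`. -/
theorem club_upper_bound {R U : Type} [Fintype R] [Fintype U]
    (p : R → U → ℝ) (hp : ∀ r u, 0 ≤ p r u)
    (hpsum : ∑ r, ∑ u, p r u = 1)
    (q : R → U → ℝ) (hq : ∀ r u, 0 < q r u)
    (hqsum : ∀ r, ∑ u, q r u = 1)
    (hKL : ∑ r, ∑ u, p r u * Real.log (p r u / ((∑ u', p r u') * q r u)) ≤
      ∑ r, ∑ u, (∑ u', p r u') * (∑ r', p r' u) *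
        Real.log (((∑ u', p r u') * (∑ r', p r' u)) / ((∑ u', p r u') * q r u))) :
    ∑ r, ∑ u, p r u * Real.log (p r u / ((∑ u', p r u') * (∑ r', p r' u))) ≤
      (∑ r, ∑ u, p r u * Real.log (q r u)) -
      ∑ r, ∑ u, (∑ u', p r u') * (∑ r', p r' u) * Real.log (q r u) := by
  have hprpos : ∀ r u, 0 < p r u → 0 < ∑ u', p r u' := fun r u h =>
    lt_of_lt_of_le h (Finset.single_le_sum (fun i _ => hp r i) (mem_univ u))
  have hpupos : ∀ r u, 0 < p r u → 0 < ∑ r', p r' u := fun r u h =>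
    lt_of_lt_of_le h (Finset.single_le_sum (fun i _ => hp i u) (mem_univ r))
  have E1 : ∑ r, ∑ u, p r u * Real.log (p r u / ((∑ u', p r u') * q r u))
      = (∑ r, ∑ u, p r u * Real.log (p r u / ((∑ u', p r u') * (∑ r', p r' u))))
        + (∑ r, ∑ u, p r u * Real.log (∑ r', p r' u))
        - (∑ r, ∑ u, p r u * Real.log (q r u)) := by
    rw [← Finset.sum_add_distrib, ← Finset.sum_sub_distrib]
    refine Finset.sum_congr rfl fun r _ => ?_
    rw [← Finset.sum_add_distrib, ← Finset.sum_sub_distrib]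
    refine Finset.sum_congr rfl fun u _ => ?_
    rcases eq_or_lt_of_le (hp r u) with h | h
    · simp [← h]
    · have h1 := hprpos r u h
      have h2 := hpupos r u h
      have h3 := hq r u
      rw [Real.log_div h.ne' (by positivity), Real.log_div h.ne' (by positivity),
        Real.log_mul h1.ne' h3.ne', Real.log_mul h1.ne' h2.ne']
      ring
  have E2 : ∑ r, ∑ u, (∑ u', p r u') * (∑ r', p r' u) *
        Real.log (((∑ u', p r u') * (∑ r', p r' u)) / ((∑ u', p r u') * q r u))
      = (∑ r, ∑ u, (∑ u', p r u') * (∑ r', p r' u) * Real.log (∑ r', p r' u))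
        - (∑ r, ∑ u, (∑ u', p r u') * (∑ r', p r' u) * Real.log (q r u)) := by
    rw [← Finset.sum_sub_distrib]
    refine Finset.sum_congr rfl fun r _ => ?_
    rw [← Finset.sum_sub_distrib]
    refine Finset.sum_congr rfl fun u _ => ?_
    have hpr : 0 ≤ ∑ u', p r u' := Finset.sum_nonneg fun i _ => hp r i
    have hpu : 0 ≤ ∑ r', p r' u := Finset.sum_nonneg fun i _ => hp i u
    rcases eq_or_lt_of_le hpr with h1 | h1
    · simp [← h1]
    rcases eq_or_lt_of_le hpu with h2 | h2
    · simp [← h2]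
    have h3 := hq r u
    rw [Real.log_div (by positivity) (by positivity),
      Real.log_mul h1.ne' h3.ne', Real.log_mul h1.ne' h2.ne']
    ring
  have E3 : ∑ r, ∑ u, p r u * Real.log (∑ r', p r' u)
      = ∑ r, ∑ u, (∑ u', p r u') * (∑ r', p r' u) * Real.log (∑ r', p r' u) := by
    rw [Finset.sum_comm]
    conv_rhs => rw [Finset.sum_comm]
    refine Finset.sum_congr rfl fun u _ => ?_
    rw [← Finset.sum_mul]
    have : ∑ r, (∑ u', p r u') * (∑ r', p r' u) * Real.log (∑ r', p r' u)
        = (∑ r, ∑ u', p r u') * ((∑ r', p r' u) * Real.log (∑ r', p r' u)) := by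
      rw [Finset.sum_mul]
      exact Finset.sum_congr rfl fun r _ => by ring
    rw [this, hpsum]
    ring
  rw [E1, E2] at hKL
  rw [E3] at hKL
  linarith
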